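/- In the setting of the SDR mapping cone: if W ⊆ B(H) and W̃ ⊆ B(H)* contain order units—i.e., a strictly positive operator e ∈ W and a strictly positive-definite functional ẽ ∈ W̃—then the Choi matrix φ(e ⊗ ẽ) of the completely positive map X ↦ ẽ(X)·e is strictly positive definite. Consequently 𝒲 = φ(S) possesses an order unit and its positive part is generating: 𝒲⁺ − 𝒲⁺ = 𝒲, where 𝒲⁺ = 𝒲 ∩ S⁺. -/

import Mathlib

open Matrix
open scoped ComplexOrder

/-- `Mat n` is `B(H)` for `H = ℂⁿ`: the `n × n` complex matrices. -/
abbrev Mat (n : ℕ) := Matrix (Fin n) (Fin n) ℂ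

/-- The Choi matrix of a linear map `Φ` on `B(ℂⁿ)`, as a real-linear map (the inverse
of the Choi–Jamiołkowski isomorphism `χ`). -/
noncomputable def choiR {n : ℕ} :
    (Mat n →ₗ[ℂ] Mat n) →ₗ[ℝ] Matrix (Fin n × Fin n) (Fin n × Fin n) ℂ where
  toFun Φ := Matrix.of fun p q => Φ (Matrix.single p.1 q.1 (1 : ℂ)) p.2 q.2
  map_add' F G := by
    ext p q
    simp
  map_smul' r F := by
    ext p q
    simp

/-- The (real) subspace `S ⊆ B(H) ⊗ B(H)*` of hermiticity-preserving maps `F` with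
`F(W) ⊆ W` and `F*(W̃) ⊆ W̃`. -/
noncomputable def stabSpace {n : ℕ} (W : Submodule ℝ (Mat n))
    (Wt : Submodule ℝ (Module.Dual ℂ (Mat n))) :
    Submodule ℝ (Mat n →ₗ[ℂ] Mat n) where
  carrier := {F | (∀ X : Mat n, F Xᴴ = (F X)ᴴ) ∧
    (∀ X ∈ W, F X ∈ W) ∧ (∀ σ ∈ Wt, σ ∘ₗ F ∈ Wt)}
  add_mem' := by
    rintro F G ⟨hF0, hF1, hF2⟩ ⟨hG0, hG1, hG2⟩
    refine ⟨fun X => ?_, fun X hX => ?_, fun σ hσ => ?_⟩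
    · simp [hF0 X, hG0 X]
    · exact Submodule.add_mem _ (hF1 X hX) (hG1 X hX)
    · have h : σ ∘ₗ (F + G) = σ ∘ₗ F + σ ∘ₗ G := by ext X; simp
      rw [h]; exact Submodule.add_mem _ (hF2 σ hσ) (hG2 σ hσ)
  zero_mem' := by
    refine ⟨fun X => by simp, fun X _ => by simp, fun σ hσ => ?_⟩
    have h : σ ∘ₗ (0 : Mat n →ₗ[ℂ] Mat n) = 0 := by ext X; simp
    rw [h]; exact Submodule.zero_mem _
  smul_mem' := by
    rintro r F ⟨hF0, hF1, hF2⟩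
    refine ⟨fun X => ?_, fun X hX => ?_, fun σ hσ => ?_⟩
    · show r • F Xᴴ = (r • F X)ᴴ
      rw [hF0 X, Matrix.conjTranspose_smul, star_trivial]
    · exact Submodule.smul_mem _ r (hF1 X hX)
    · have h : σ ∘ₗ (r • F) = r • (σ ∘ₗ F) := by ext X; simp
      rw [h]; exact Submodule.smul_mem _ r (hF2 σ hσ)


open scoped Kronecker

section Aux
set_option linter.unusedSectionVars false


variable {m l : Type*} [Fintype m] [DecidableEq m] [Fintype l] [DecidableEq l]

lemma kron_conjTranspose' (A : Matrix m m ℂ) (B : Matrix l l ℂ) :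
    (A ⊗ₖ B)ᴴ = Aᴴ ⊗ₖ Bᴴ := by
  ext p q
  simp [Matrix.conjTranspose_apply, Matrix.kroneckerMap_apply]

lemma posDef_conjTranspose_mul_self' (B : Matrix m m ℂ) (hB : IsUnit B.det) :
    (Bᴴ * B).PosDef := by
  refine Matrix.posDef_iff_dotProduct_mulVec.mpr ⟨(Matrix.posSemidef_conjTranspose_mul_self B).isHermitian, fun x hx => ?_⟩
  have hBx : B *ᵥ x ≠ 0 := by
    have hinj : Function.Injective B.mulVec :=
      Matrix.mulVec_injective_iff_isUnit.mpr ((Matrix.isUnit_iff_isUnit_det B).mpr hB)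
    intro h
    exact hx (hinj (by simpa using h))
  have h1 : star x ⬝ᵥ (Bᴴ * B) *ᵥ x = star (B *ᵥ x) ⬝ᵥ (B *ᵥ x) := by
    rw [← Matrix.mulVec_mulVec, Matrix.dotProduct_mulVec, Matrix.star_mulVec]
  rw [h1]
  exact Matrix.dotProduct_star_self_pos_iff.mpr hBx

lemma posDef_kron {A : Matrix m m ℂ} {B : Matrix l l ℂ} (hA : A.PosDef) (hB : B.PosDef) :
    (A ⊗ₖ B).PosDef := by
  exact hA.kronecker hB

lemma posSemidef_real_smul {M : Matrix m m ℂ} (hM : M.PosSemidef) {r : ℝ} (hr : 0 ≤ r) :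
    (r • M).PosSemidef := by
  refine Matrix.posSemidef_iff_dotProduct_mulVec.mpr ⟨?_, ?_⟩
  · show (r • M)ᴴ = r • M
    rw [Matrix.conjTranspose_smul, star_trivial, hM.isHermitian.eq]
  · intro x
    have : star x ⬝ᵥ (r • M) *ᵥ x = (r : ℂ) * (star x ⬝ᵥ M *ᵥ x) := by
      rw [show (r • M) = (r : ℂ) • M by ext i j; simp [Complex.real_smul]]
      rw [Matrix.smul_mulVec, dotProduct_smul, smul_eq_mul]
    rw [this]
    exact mul_nonneg (by exact_mod_cast hr) (hM.dotProduct_mulVec_nonneg x)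

open scoped MatrixOrder in
lemma exists_lam_smul_sub_posSemidef (E A : Matrix m m ℂ) (hE : E.PosDef) (hA : A.IsHermitian) :
    ∃ lam : ℝ, 0 < lam ∧ (lam • E - A).PosSemidef := by
  have hEP := hE.posSemidef
  set S := CFC.sqrt E with hSdef
  have hSS : S * S = E := CFC.sqrt_mul_sqrt_self E hEP.nonneg
  have hSH : S.IsHermitian := (Matrix.nonneg_iff_posSemidef.mp (CFC.sqrt_nonneg E)).isHermitian
  have hdS : IsUnit S.det := by
    have h2 : S.det * S.det = E.det := by rw [← Matrix.det_mul, hSS]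
    have hE0 : E.det ≠ 0 := hE.det_pos.ne'
    have hS0 : S.det ≠ 0 := fun h => hE0 (by rw [← h2, h, zero_mul])
    exact hS0.isUnit
  have hSinv : S⁻¹.IsHermitian := hSH.inv
  set H := S⁻¹ * A * S⁻¹ with hHdef
  have hHH : H.IsHermitian := by
    have := Matrix.isHermitian_conjTranspose_mul_mul S⁻¹ hA
    rwa [hSinv.eq] at this
  set lam := max (⨆ i, hHH.eigenvalues i) 1 with hlamdef
  have hlampos : 0 < lam := lt_of_lt_of_le zero_lt_one (le_max_right _ _)
  have hlamge : ∀ i, hHH.eigenvalues i ≤ lam := fun i =>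
    le_trans (le_ciSup (Set.Finite.bddAbove (Set.finite_range _)) i) (le_max_left _ _)
  have key : (lam • (1 : Matrix m m ℂ) - H).PosSemidef := by
    have hst := hHH.spectral_theorem
    set U : Matrix m m ℂ := (Matrix.IsHermitian.eigenvectorUnitary hHH : Matrix m m ℂ) with hUdef
    have hU : U * star U = 1 :=
      Matrix.mem_unitaryGroup_iff.mp (Matrix.IsHermitian.eigenvectorUnitary hHH).2
    have hdiag : lam • (1 : Matrix m m ℂ) - H
        = U * (Matrix.diagonal fun i => ((lam - hHH.eigenvalues i : ℝ) : ℂ)) * star U := by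
      have h1 : (Matrix.diagonal fun i => ((lam - hHH.eigenvalues i : ℝ) : ℂ))
          = lam • (1 : Matrix m m ℂ) - Matrix.diagonal (RCLike.ofReal ∘ hHH.eigenvalues) := by
        ext i j
        by_cases h : i = j
        · subst h
          simp [Matrix.diagonal_apply, Complex.real_smul]
        · simp [Matrix.diagonal_apply, h]
      rw [h1, Matrix.mul_sub, Matrix.sub_mul, ← (show H = U * _ * star U from hst)]
      congr 1
      rw [Matrix.mul_smul, Matrix.smul_mul, Matrix.mul_one, hU]
    rw [hdiag]
    have : (Matrix.diagonal fun i => ((lam - hHH.eigenvalues i : ℝ) : ℂ)).PosSemidef := by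
      refine Matrix.posSemidef_diagonal_iff.mpr fun i => ?_
      have h0 : (0:ℝ) ≤ lam - hHH.eigenvalues i := sub_nonneg.mpr (hlamge i)
      exact_mod_cast h0
    simpa [Matrix.star_eq_conjTranspose] using this.mul_mul_conjTranspose_same U
  have hfin : lam • E - A = S * (lam • (1 : Matrix m m ℂ) - H) * Sᴴ := by
    rw [hSH.eq]
    have hSHS : S * H * S = A := by
      rw [hHdef]
      have : S * (S⁻¹ * A * S⁻¹) * S = (S * S⁻¹) * A * (S⁻¹ * S) := by
        simp only [Matrix.mul_assoc]
      rw [this, Matrix.mul_nonsing_inv _ hdS, Matrix.nonsing_inv_mul _ hdS,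
        Matrix.one_mul, Matrix.mul_one]
    rw [Matrix.mul_sub, Matrix.sub_mul, hSHS, Matrix.mul_smul, Matrix.smul_mul,
      Matrix.mul_one, hSS]
  exact ⟨lam, hlampos, hfin ▸ key.mul_mul_conjTranspose_same S⟩

end Aux

lemma trace_mul_stdBasisMatrix {n : ℕ} (σ₀ : Mat n) (i j : Fin n) :
    (σ₀ * Matrix.single i j (1:ℂ)).trace = σ₀ j i := by
  rw [Matrix.trace, Finset.sum_eq_single j]
  · simp [Matrix.diag]
  · intro b _ hb
    simp [Matrix.diag, Matrix.mul_single_apply_of_ne, hb]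
  · simp

lemma choiR_smulRight {n : ℕ} (ee : Module.Dual ℂ (Mat n)) (e σ₀ : Mat n)
    (heeForm : ∀ X : Mat n, ee X = (σ₀ * X).trace) :
    choiR (ee.smulRight e) = σ₀ᵀ ⊗ₖ e := by
  ext p q
  show (ee.smulRight e) (Matrix.single p.1 q.1 1) p.2 q.2 = _
  rw [LinearMap.smulRight_apply]
  simp [heeForm, trace_mul_stdBasisMatrix, Matrix.kroneckerMap_apply, Matrix.transpose_apply]

lemma choiR_isHermitian {n : ℕ} (F : Mat n →ₗ[ℂ] Mat n)
    (hF : ∀ X : Mat n, F Xᴴ = (F X)ᴴ) : (choiR F).IsHermitian := by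
  show (choiR F)ᴴ = choiR F
  ext p q
  rw [Matrix.conjTranspose_apply]
  show star (F (Matrix.single q.1 p.1 1) q.2 p.2)
      = F (Matrix.single p.1 q.1 1) p.2 q.2
  have h1 : Matrix.single q.1 p.1 (1:ℂ) = (Matrix.single p.1 q.1 (1:ℂ))ᴴ := by
    ext a b
    simp [Matrix.single, Matrix.conjTranspose_apply, and_comm]
  rw [h1, hF, Matrix.conjTranspose_apply, star_star]

/-- if `W ⊆ B(H)` and `W̃ ⊆ B(H)*` contain order units — a strictly
positive `e ∈ W` and a strictly positive-definite functional `ẽ = tr(σ₀ ·) ∈ W̃` —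
then the Choi matrix of the completely positive map `X ↦ ẽ(X) e` is strictly positive
definite; consequently `𝒲 = φ(S)` has an order unit and its positive part is
generating: `𝒲⁺ − 𝒲⁺ = 𝒲`. -/
theorem choi_of_order_unit_posdef_and_generating
    {n : ℕ} (W : Submodule ℝ (Mat n)) (hW : ∀ A ∈ W, A.IsHermitian)
    (Wt : Submodule ℝ (Module.Dual ℂ (Mat n)))
    (hWt : ∀ σ ∈ Wt, ∀ X : Mat n, σ Xᴴ = star (σ X))
    (e : Mat n) (he : e ∈ W) (hePD : e.PosDef)
    (ee : Module.Dual ℂ (Mat n)) (hee : ee ∈ Wt)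
    (σ₀ : Mat n) (hσ₀ : σ₀.PosDef) (heeForm : ∀ X : Mat n, ee X = (σ₀ * X).trace) :
    -- the Choi matrix of X ↦ ẽ(X) e is strictly positive definite
    (choiR (ee.smulRight e)).PosDef ∧
    -- 𝒲 = φ(S) possesses an order unit, namely φ(e ⊗ ẽ)
    (choiR (ee.smulRight e) ∈ Submodule.map choiR (stabSpace W Wt) ∧
      ∀ A ∈ Submodule.map choiR (stabSpace W Wt), ∃ lam : ℝ, 0 < lam ∧
        (lam • choiR (ee.smulRight e) - A) ∈ Submodule.map choiR (stabSpace W Wt) ∧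
        (lam • choiR (ee.smulRight e) - A).PosSemidef) ∧
    -- the positive part of 𝒲 is generating: 𝒲⁺ − 𝒲⁺ = 𝒲
    {A : Matrix (Fin n × Fin n) (Fin n × Fin n) ℂ |
        ∃ B C : Matrix (Fin n × Fin n) (Fin n × Fin n) ℂ,
          B ∈ Submodule.map choiR (stabSpace W Wt) ∧ B.PosSemidef ∧
          C ∈ Submodule.map choiR (stabSpace W Wt) ∧ C.PosSemidef ∧
          A = B - C}
      = (Submodule.map choiR (stabSpace W Wt) : Set _) := by
  have hFstab : ee.smulRight e ∈ stabSpace W Wt := by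
    refine ⟨fun X => ?_, fun X hX => ?_, fun σ hσ => ?_⟩
    · show ee Xᴴ • e = (ee X • e)ᴴ
      rw [hWt ee hee X, Matrix.conjTranspose_smul, hePD.isHermitian.eq]
    · show ee X • e ∈ W
      have hXh : Xᴴ = X := hW X hX
      have hstar : ee X = star (ee X) := by
        have h := hWt ee hee X
        rw [hXh] at h
        exact h
      have hreal : ((ee X).re : ℂ) = ee X := Complex.conj_eq_iff_re.mp hstar.symm
      rw [← hreal, Complex.coe_smul]
      exact Submodule.smul_mem _ _ he
    · show σ ∘ₗ ee.smulRight e ∈ Wt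
      have hse : ((σ e).re : ℂ) = σ e := by
        refine Complex.conj_eq_iff_re.mp ?_
        have h := hWt σ hσ e
        rw [hePD.isHermitian.eq] at h
        exact h.symm
      have heq : σ ∘ₗ ee.smulRight e = (σ e).re • ee := by
        ext X
        show σ (ee X • e) = (σ e).re • ee X
        rw [_root_.map_smul, smul_eq_mul, ← Complex.coe_smul, smul_eq_mul, hse, mul_comm]
      rw [heq]
      exact Submodule.smul_mem _ _ hee
  have hEkron : choiR (ee.smulRight e) = σ₀ᵀ ⊗ₖ e := choiR_smulRight ee e σ₀ heeForm
  have hEPD : (choiR (ee.smulRight e)).PosDef := by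
    rw [hEkron]
    exact posDef_kron hσ₀.transpose hePD
  have hEmem : choiR (ee.smulRight e) ∈ Submodule.map choiR (stabSpace W Wt) :=
    ⟨_, hFstab, rfl⟩
  have horder : ∀ A ∈ Submodule.map choiR (stabSpace W Wt), ∃ lam : ℝ, 0 < lam ∧
      (lam • choiR (ee.smulRight e) - A) ∈ Submodule.map choiR (stabSpace W Wt) ∧
      (lam • choiR (ee.smulRight e) - A).PosSemidef := by
    rintro A ⟨F, hF, rfl⟩
    have hAH : (choiR F).IsHermitian := choiR_isHermitian F hF.1
    obtain ⟨lam, hl, hPSD⟩ :=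
      exists_lam_smul_sub_posSemidef (choiR (ee.smulRight e)) (choiR F) hEPD hAH
    exact ⟨lam, hl,
      Submodule.sub_mem _ (Submodule.smul_mem _ _ hEmem) ⟨F, hF, rfl⟩, hPSD⟩
  refine ⟨hEPD, ⟨hEmem, horder⟩, ?_⟩
  ext A
  simp only [Set.mem_setOf_eq, SetLike.mem_coe]
  constructor
  · rintro ⟨B, C, hB, _, hC, _, rfl⟩
    exact Submodule.sub_mem _ hB hC
  · intro hA
    obtain ⟨lam, hl, hmem, hPSD⟩ := horder A hA
    exact ⟨lam • choiR (ee.smulRight e), lam • choiR (ee.smulRight e) - A,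
      Submodule.smul_mem _ _ hEmem, posSemidef_real_smul hEPD.posSemidef hl.le,
      hmem, hPSD, (sub_sub_cancel _ _).symm⟩
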